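/- Let L be the free Lie algebra over a field K on a set X with at least two distinct generators a and b. If f is a polynomial over K such that Σᵢ (coeff f i) • (ad ι(a))^i (ι(b)) = 0 in L, then f = 0. -/

import Mathlib

attribute [local instance 100] LieRing.ofAssociativeRing

section Aux

variable {K : Type*} [Field K] {X : Type*}

private lemma toList_pow_of (a : X) (i : ℕ) :
    FreeMonoid.toList ((FreeMonoid.of a) ^ i) = List.replicate i a := by
  induction i with
  | zero => rfl
  | succ n ih =>
    rw [pow_succ, FreeMonoid.toList_mul, ih, FreeMonoid.toList_of]
    exact (List.replicate_succ' (n := n) (a := a)).symm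

private lemma key_decomp (a b : X) (i : ℕ) :
    ∃ r : MonoidAlgebra K (FreeMonoid X),
      ((fun w : MonoidAlgebra K (FreeMonoid X) =>
          ⁅w, MonoidAlgebra.of K (FreeMonoid X) (FreeMonoid.of a)⁆)^[i]
        (MonoidAlgebra.of K (FreeMonoid X) (FreeMonoid.of b)))
        = MonoidAlgebra.single (FreeMonoid.of b * (FreeMonoid.of a) ^ i) 1 + r
      ∧ ∀ w ∈ r.coeff.support, ∃ t : List X, FreeMonoid.toList w = a :: t := by
  classical
  induction i with
  | zero =>
    refine ⟨0, ?_, by simp⟩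
    simp [MonoidAlgebra.of_apply]
  | succ n ih =>
    obtain ⟨r, hr, hrsupp⟩ := ih
    set A : MonoidAlgebra K (FreeMonoid X) :=
      MonoidAlgebra.of K (FreeMonoid X) (FreeMonoid.of a) with hA
    set s : MonoidAlgebra K (FreeMonoid X) :=
      MonoidAlgebra.single (FreeMonoid.of b * (FreeMonoid.of a) ^ n) 1 with hs
    refine ⟨r * A - A * (s + r), ?_, ?_⟩
    · rw [Function.iterate_succ_apply', hr, Ring.lie_def]
      have hsA : s * A = MonoidAlgebra.single (FreeMonoid.of b * (FreeMonoid.of a) ^ (n + 1)) 1 := by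
        rw [hs, hA, MonoidAlgebra.of_apply, MonoidAlgebra.single_mul_single, mul_one,
          mul_assoc, pow_succ]
      rw [add_mul, hsA, add_sub_assoc]
    · intro w hw
      have hw' : w ∈ (r * A).coeff.support ∪ (A * (s + r)).coeff.support :=
        Finsupp.support_sub hw
      rcases Finset.mem_union.mp hw' with hw1 | hw2
      · have := MonoidAlgebra.support_coeff_mul_subset r A hw1
        rw [Finset.mem_mul] at this
        obtain ⟨u, hu, v, hv, huv⟩ := this
        obtain ⟨t, ht⟩ := hrsupp u hu
        refine ⟨t ++ FreeMonoid.toList v, ?_⟩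
        rw [← huv, FreeMonoid.toList_mul, ht]
        rfl
      · have := MonoidAlgebra.support_coeff_mul_subset A (s + r) hw2
        rw [Finset.mem_mul] at this
        obtain ⟨u, hu, v, hv, huv⟩ := this
        have hu' : u = FreeMonoid.of a := by
          have : u ∈ ({FreeMonoid.of a} : Finset (FreeMonoid X)) :=
            Finsupp.support_single_subset hu
          simpa using this
        refine ⟨FreeMonoid.toList v, ?_⟩
        rw [← huv, hu', FreeMonoid.toList_mul, FreeMonoid.toList_of]
        rfl

private lemma key_eval (a b : X) (hab : a ≠ b) (i j : ℕ) :
    ((fun w : MonoidAlgebra K (FreeMonoid X) =>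
        ⁅w, MonoidAlgebra.of K (FreeMonoid X) (FreeMonoid.of a)⁆)^[i]
      (MonoidAlgebra.of K (FreeMonoid X) (FreeMonoid.of b))).coeff
      (FreeMonoid.of b * (FreeMonoid.of a) ^ j) = if i = j then 1 else 0 := by
  classical
  obtain ⟨r, hr, hrsupp⟩ := key_decomp (K := K) a b i
  rw [hr]
  have hrz : r.coeff (FreeMonoid.of b * (FreeMonoid.of a) ^ j) = 0 := by
    by_contra hne
    obtain ⟨t, ht⟩ := hrsupp _ (Finsupp.mem_support_iff.mpr hne)
    rw [FreeMonoid.toList_mul, FreeMonoid.toList_of, toList_pow_of] at ht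
    have ht' : b :: List.replicate j a = a :: t := by simpa using ht
    exact hab (List.cons_eq_cons.mp ht').1.symm
  rw [MonoidAlgebra.coeff_add, Finsupp.add_apply, hrz, add_zero, MonoidAlgebra.coeff_single,
    Finsupp.single_apply]
  congr 1
  simp only [eq_iff_iff]
  constructor
  · intro hij
    have := congrArg (List.length ∘ FreeMonoid.toList) hij
    simp only [Function.comp_apply, FreeMonoid.toList_mul, FreeMonoid.toList_of,
      toList_pow_of, List.length_append, List.length_replicate] at this
    omega
  · rintro rfl; rfl

end Aux

theorem free_lie_faithful_poly {K : Type*} [Field K] {X : Type*} (a b : X) (hab : a ≠ b)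
    (f : Polynomial K)
    (h : (f.sum fun i α =>
        α • (fun w : FreeLieAlgebra K X => ⁅w, FreeLieAlgebra.of K a⁆)^[i]
          (FreeLieAlgebra.of K b)) = 0) :
    f = 0 := by
  classical
  let φ : FreeLieAlgebra K X →ₗ⁅K⁆ MonoidAlgebra K (FreeMonoid X) :=
    FreeLieAlgebra.lift K (fun x => MonoidAlgebra.of K (FreeMonoid X) (FreeMonoid.of x))
  have hφa : φ (FreeLieAlgebra.of K a) = MonoidAlgebra.of K (FreeMonoid X) (FreeMonoid.of a) :=
    FreeLieAlgebra.lift_of_apply _ _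
  have hφb : φ (FreeLieAlgebra.of K b) = MonoidAlgebra.of K (FreeMonoid X) (FreeMonoid.of b) :=
    FreeLieAlgebra.lift_of_apply _ _
  have hiter : ∀ i : ℕ,
      φ ((fun w : FreeLieAlgebra K X => ⁅w, FreeLieAlgebra.of K a⁆)^[i]
          (FreeLieAlgebra.of K b))
        = (fun w : MonoidAlgebra K (FreeMonoid X) => ⁅w, MonoidAlgebra.of K (FreeMonoid X) (FreeMonoid.of a)⁆)^[i]
            (MonoidAlgebra.of K (FreeMonoid X) (FreeMonoid.of b)) := by
    intro i
    induction i with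
    | zero => simpa using hφb
    | succ n ihn =>
      rw [Function.iterate_succ_apply', Function.iterate_succ_apply',
        LieHom.map_lie, ihn, hφa]
  have h2 : (f.sum fun i α =>
      α • (fun w : MonoidAlgebra K (FreeMonoid X) => ⁅w, MonoidAlgebra.of K (FreeMonoid X) (FreeMonoid.of a)⁆)^[i]
        (MonoidAlgebra.of K (FreeMonoid X) (FreeMonoid.of b))) = 0 := by
    have := congrArg φ h
    rw [map_zero] at this
    rw [← this, Polynomial.sum_def, Polynomial.sum_def, ← LieHom.coe_toLinearMap, map_sum]
    refine Finset.sum_congr rfl fun i _ => ?_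
    rw [map_smul, LieHom.coe_toLinearMap, hiter i]
  ext j
  have h3 := congrArg (fun g : MonoidAlgebra K (FreeMonoid X) =>
    g.coeff (FreeMonoid.of b * (FreeMonoid.of a) ^ j)) h2
  rw [Polynomial.sum_def] at h3
  rw [MonoidAlgebra.coeff_sum] at h3
  erw [Finset.sum_apply'] at h3
  simp only [Finsupp.smul_apply, MonoidAlgebra.coeff_zero, Finsupp.coe_zero, Pi.zero_apply] at h3
  have h4 : ∀ i ∈ f.support,
      (f.coeff i • ((fun w : MonoidAlgebra K (FreeMonoid X) => ⁅w, MonoidAlgebra.of K (FreeMonoid X) (FreeMonoid.of a)⁆)^[i]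
        (MonoidAlgebra.of K (FreeMonoid X) (FreeMonoid.of b)))).coeff
          (FreeMonoid.of b * (FreeMonoid.of a) ^ j)
        = if i = j then f.coeff i else 0 := by
    intro i _
    rw [MonoidAlgebra.coeff_smul]
    erw [Finsupp.smul_apply]
    rw [key_eval a b hab i j]
    split <;> simp
  rw [Finset.sum_congr rfl h4, Finset.sum_ite_eq' f.support j (fun i => f.coeff i)] at h3
  simp only [Polynomial.coeff_zero]
  by_cases hj : j ∈ f.support
  · simpa [hj] using h3
  · exact Polynomial.notMem_support_iff.mp hj
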